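/- Let U ⊆ ℂ be open, let P, χ : U → ℂ be holomorphic with P nowhere vanishing on U, and let u : U → ℝ be a twice continuously differentiable function satisfying Δu = 4·(e^{2u} − e^{−2u}·|P|²) on U. Define Ṗ = χ·P' + 2·χ'·P, define u_z = (1/2)·(∂u/∂x − i·∂u/∂y), define F = χ' + 2·χ·u_z, and define the complex-valued function g = (e^{−2u} − |P|^{−1})·(2·|P|²·χ'·conj(χ) + |χ|²·P'·conj(P)) on U. Then the following identity holds at every point of U: ∂/∂x (2·Re g) − ∂/∂y (2·Im g) = 4·e^{−2u}·(|Ṗ|² − Re(F·P·conj(Ṗ))) − 2·|Ṗ|²/|P|. (Equivalently: the 2-form δ = [4e^{−2u}(|Ṗ|² − Re(F P conj(Ṗ))) − 2|Ṗ|²/|P|] dx∧dy is the exterior derivative of the 1-form β = 2·Im(g)·dx + 2·Re(g)·dy.) -/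

import Mathlib

/-- Directional derivative of `f : ℂ → E` at `z` in the direction `v ∈ ℂ`. -/
noncomputable def dirDeriv {E : Type*} [NormedAddCommGroup E] [NormedSpace ℝ E]
    (v : ℂ) (f : ℂ → E) (z : ℂ) : E :=
  deriv (fun t : ℝ => f (z + t • v)) 0

/-- The flat Laplacian `Δf = ∂²f/∂x² + ∂²f/∂y²` of a function on `ℂ ≅ ℝ²`
(applied componentwise when the target is `ℂ`). -/
noncomputable def flatLaplacian {E : Type*} [NormedAddCommGroup E] [NormedSpace ℝ E]
    (f : ℂ → E) (z : ℂ) : E :=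
  dirDeriv 1 (dirDeriv 1 f) z + dirDeriv Complex.I (dirDeriv Complex.I f) z

/-- The Wirtinger derivative `u_z = ½(∂u/∂x − i ∂u/∂y)` of a real-valued
function on `ℂ`. -/
noncomputable def wirtingerDeriv (u : ℂ → ℝ) (z : ℂ) : ℂ :=
  (((dirDeriv 1 u z : ℝ) : ℂ) - Complex.I * ((dirDeriv Complex.I u z : ℝ) : ℂ)) / 2

/-- `Ṗ = χ P' + 2 χ' P`. -/
noncomputable def lieDerivCoeff (P χ : ℂ → ℂ) (z : ℂ) : ℂ :=
  χ z * deriv P z + 2 * deriv χ z * P z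

/-- `F = χ' + 2 χ u_z`. -/
noncomputable def holoVariation (χ : ℂ → ℂ) (u : ℂ → ℝ) (z : ℂ) : ℂ :=
  deriv χ z + 2 * χ z * wirtingerDeriv u z

/-- `g = (e^{−2u} − |P|⁻¹)(2|P|² χ' conj(χ) + |χ|² P' conj(P))`. -/
noncomputable def exactnessPotential (P χ : ℂ → ℂ) (u : ℂ → ℝ) (z : ℂ) : ℂ :=
  ((Real.exp (-(2 * u z)) - (‖P z‖)⁻¹ : ℝ) : ℂ) *
    (2 * ((‖P z‖ : ℂ)) ^ 2 * deriv χ z * (starRingEnd ℂ) (χ z)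
      + ((‖χ z‖ : ℂ)) ^ 2 * deriv P z * (starRingEnd ℂ) (P z))

private lemma hasDerivAt_line {f : ℂ → ℂ} {f' : ℂ} (z v : ℂ) (hf : HasDerivAt f f' z) :
    HasDerivAt (fun t : ℝ => f (z + t • v)) (v * f') 0 := by
  have hl : HasDerivAt (fun t : ℝ => z + t • v) v 0 := by
    simpa using ((hasDerivAt_id (0 : ℝ)).smul_const v).const_add z
  have := HasDerivAt.scomp_of_eq (x := (0 : ℝ)) hf hl (by simp)
  simpa [Function.comp_def, smul_eq_mul] using this

private lemma hasDerivAt_line_real {u : ℂ → ℝ} {du : ℂ →L[ℝ] ℝ} (z v : ℂ)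
    (h : HasFDerivAt u du z) :
    HasDerivAt (fun t : ℝ => u (z + t • v)) (du v) 0 := by
  have hl : HasDerivAt (fun t : ℝ => z + t • v) v 0 := by
    simpa using ((hasDerivAt_id (0 : ℝ)).smul_const v).const_add z
  have := HasFDerivAt.comp_hasDerivAt_of_eq (x := (0 : ℝ)) h hl (by simp)
  simpa [Function.comp_def] using this

private lemma HasDerivAt.complexRe {f : ℝ → ℂ} {f' : ℂ} {t : ℝ} (h : HasDerivAt f f' t) :
    HasDerivAt (fun s => (f s).re) f'.re t := by
  have := Complex.reCLM.hasFDerivAt.comp_hasDerivAt t h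
  simpa [Function.comp_def] using this

private lemma HasDerivAt.complexIm {f : ℝ → ℂ} {f' : ℂ} {t : ℝ} (h : HasDerivAt f f' t) :
    HasDerivAt (fun s => (f s).im) f'.im t := by
  have := Complex.imCLM.hasFDerivAt.comp_hasDerivAt t h
  simpa [Function.comp_def] using this

private lemma HasDerivAt.complexOfReal {f : ℝ → ℝ} {f' : ℝ} {t : ℝ} (h : HasDerivAt f f' t) :
    HasDerivAt (fun s => ((f s : ℝ) : ℂ)) (f' : ℂ) t := by
  have := Complex.ofRealCLM.hasFDerivAt.comp_hasDerivAt t h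
  simpa [Function.comp_def] using this

/-- The value of the line derivative of the (rewritten) potential. -/
private noncomputable def Dval (P χ : ℂ → ℂ) (u : ℂ → ℝ) (z v : ℂ) (a2 b2 : ℂ) (dv : ℝ) : ℂ :=
  ((-(2 * dv) * Real.exp (-(2 * u z)) +
      ((v * deriv P z) * (starRingEnd ℂ) (P z) + P z * (starRingEnd ℂ) (v * deriv P z)).re /
        (2 * Real.sqrt ((P z * (starRingEnd ℂ) (P z)).re) ^ 3) : ℝ) : ℂ) *
    (2 * (P z * (starRingEnd ℂ) (P z)) * deriv χ z * (starRingEnd ℂ) (χ z)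
      + (χ z * (starRingEnd ℂ) (χ z)) * deriv P z * (starRingEnd ℂ) (P z))
  + ((Real.exp (-(2 * u z)) - (Real.sqrt ((P z * (starRingEnd ℂ) (P z)).re))⁻¹ : ℝ) : ℂ) *
    (2 * (((v * deriv P z) * (starRingEnd ℂ) (P z) + P z * (starRingEnd ℂ) (v * deriv P z))
            * deriv χ z * (starRingEnd ℂ) (χ z)
          + (P z * (starRingEnd ℂ) (P z)) *
              ((v * b2) * (starRingEnd ℂ) (χ z) + deriv χ z * (starRingEnd ℂ) (v * deriv χ z)))
      + ((v * deriv χ z) * (starRingEnd ℂ) (χ z) + χ z * (starRingEnd ℂ) (v * deriv χ z))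
          * deriv P z * (starRingEnd ℂ) (P z)
      + (χ z * (starRingEnd ℂ) (χ z)) *
          ((v * a2) * (starRingEnd ℂ) (P z) + deriv P z * (starRingEnd ℂ) (v * deriv P z)))

private lemma lemE (P χ : ℂ → ℂ) (u : ℂ → ℝ) (z v : ℂ) (a2 b2 : ℂ) (du : ℂ →L[ℝ] ℝ)
    (hP1 : HasDerivAt P (deriv P z) z) (hP2 : HasDerivAt (deriv P) a2 z)
    (hχ1 : HasDerivAt χ (deriv χ z) z) (hχ2 : HasDerivAt (deriv χ) b2 z)
    (hdu : HasFDerivAt u du z) (hP0 : P z ≠ 0) :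
    HasDerivAt (fun t : ℝ =>
      ((Real.exp (-(2 * u (z + t • v)))
          - (Real.sqrt ((P (z + t • v) * (starRingEnd ℂ) (P (z + t • v))).re))⁻¹ : ℝ) : ℂ) *
        (2 * (P (z + t • v) * (starRingEnd ℂ) (P (z + t • v))) * deriv χ (z + t • v)
            * (starRingEnd ℂ) (χ (z + t • v))
          + (χ (z + t • v) * (starRingEnd ℂ) (χ (z + t • v))) * deriv P (z + t • v)
            * (starRingEnd ℂ) (P (z + t • v))))
      (Dval P χ u z v a2 b2 (du v)) 0 := by
  have hPl : HasDerivAt (fun t : ℝ => P (z + t • v)) (v * deriv P z) 0 :=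
    hasDerivAt_line z v hP1
  have hPl' : HasDerivAt (fun t : ℝ => deriv P (z + t • v)) (v * a2) 0 :=
    hasDerivAt_line z v hP2
  have hχl : HasDerivAt (fun t : ℝ => χ (z + t • v)) (v * deriv χ z) 0 :=
    hasDerivAt_line z v hχ1
  have hχl' : HasDerivAt (fun t : ℝ => deriv χ (z + t • v)) (v * b2) 0 :=
    hasDerivAt_line z v hχ2
  have hPlc : HasDerivAt (fun t : ℝ => (starRingEnd ℂ) (P (z + t • v)))
      ((starRingEnd ℂ) (v * deriv P z)) 0 := by simpa using hPl.star
  have hχlc : HasDerivAt (fun t : ℝ => (starRingEnd ℂ) (χ (z + t • v)))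
      ((starRingEnd ℂ) (v * deriv χ z)) 0 := by simpa using hχl.star
  have hul : HasDerivAt (fun t : ℝ => u (z + t • v)) (du v) 0 :=
    hasDerivAt_line_real z v hdu
  -- exp part
  have hexp : HasDerivAt (fun t : ℝ => Real.exp (-(2 * u (z + t • v))))
      (Real.exp (-(2 * u z)) * -(2 * du v)) 0 := by
    have hm : HasDerivAt (fun t : ℝ => -(2 * u (z + t • v))) (-(2 * du v)) 0 :=
      (hul.const_mul 2).neg
    simpa using hm.exp
  -- |P|^2 = (P * conj P).re part
  have hq : HasDerivAt (fun t : ℝ => (P (z + t • v) * (starRingEnd ℂ) (P (z + t • v))).re)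
      ((v * deriv P z * (starRingEnd ℂ) (P z) + P z * (starRingEnd ℂ) (v * deriv P z)).re) 0 := by
    simpa using (hPl.mul hPlc).complexRe
  have hn0 : (P z * (starRingEnd ℂ) (P z)).re ≠ 0 := by
    rw [Complex.mul_conj, Complex.ofReal_re]
    exact (Complex.normSq_pos.mpr hP0).ne'
  have hnpos : 0 < (P z * (starRingEnd ℂ) (P z)).re := by
    rw [Complex.mul_conj, Complex.ofReal_re]
    exact Complex.normSq_pos.mpr hP0
  have hsq : HasDerivAt
      (fun t : ℝ => Real.sqrt ((P (z + t • v) * (starRingEnd ℂ) (P (z + t • v))).re))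
      (1 / (2 * Real.sqrt ((P z * (starRingEnd ℂ) (P z)).re)) *
        ((v * deriv P z * (starRingEnd ℂ) (P z) + P z * (starRingEnd ℂ) (v * deriv P z)).re)) 0 := by
    have := HasDerivAt.comp_of_eq (x := (0 : ℝ)) (Real.hasDerivAt_sqrt hn0) hq (by simp)
    simpa [Function.comp_def] using this
  have hsne : Real.sqrt ((P z * (starRingEnd ℂ) (P z)).re) ≠ 0 :=
    Real.sqrt_ne_zero'.mpr hnpos
  have hinv := hsq.inv (by simpa using hsne)
  have hh := (hexp.sub hinv).complexOfReal
  -- A part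
  have hA := ((((hPl.mul hPlc).const_mul 2).mul hχl').mul hχlc).add
    (((hχl.mul hχlc).mul hPl').mul hPlc)
  have H := hh.mul hA
  refine H.congr_deriv ?_
  simp only [zero_smul, add_zero, Dval, Pi.mul_apply, Pi.add_apply, Pi.sub_apply, Pi.inv_apply]
  push_cast
  ring


/-- Lemma 8.1, exactness: with `P`, `χ` holomorphic, `P ≠ 0`, and
`Δu = 4(e^{2u} − e^{−2u}|P|²)` on `U`, the density
`4e^{−2u}(|Ṗ|² − Re(F P conj Ṗ)) − 2|Ṗ|²/|P|` equals
`∂ₓ(2 Re g) − ∂_y(2 Im g)`, i.e. `δ = dβ` for `β = 2 Im(g) dx + 2 Re(g) dy`. -/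
theorem statement10 (U : Set ℂ) (hU : IsOpen U)
    (P χ : ℂ → ℂ) (hP : DifferentiableOn ℂ P U) (hχ : DifferentiableOn ℂ χ U)
    (hP0 : ∀ z ∈ U, P z ≠ 0)
    (u : ℂ → ℝ) (hu : ContDiffOn ℝ 2 u U)
    (hu_eq : ∀ z ∈ U, flatLaplacian u z
      = 4 * (Real.exp (2 * u z) - Real.exp (-(2 * u z)) * (‖P z‖) ^ 2)) :
    ∀ z ∈ U,
      dirDeriv 1 (fun w => 2 * (exactnessPotential P χ u w).re) z
        - dirDeriv Complex.I (fun w => 2 * (exactnessPotential P χ u w).im) z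
      = 4 * Real.exp (-(2 * u z)) *
          ((‖lieDerivCoeff P χ z‖) ^ 2
            - (holoVariation χ u z * P z * (starRingEnd ℂ) (lieDerivCoeff P χ z)).re)
        - 2 * (‖lieDerivCoeff P χ z‖) ^ 2 / ‖P z‖ := by
  intro z hz
  have hmem : U ∈ nhds z := hU.mem_nhds hz
  have hPa : AnalyticOnNhd ℂ P U := hP.analyticOnNhd hU
  have hχa : AnalyticOnNhd ℂ χ U := hχ.analyticOnNhd hU
  have hP1 : HasDerivAt P (deriv P z) z := (hPa z hz).differentiableAt.hasDerivAt
  have hP2 : HasDerivAt (deriv P) (deriv (deriv P) z) z :=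
    (hPa.deriv z hz).differentiableAt.hasDerivAt
  have hχ1 : HasDerivAt χ (deriv χ z) z := (hχa z hz).differentiableAt.hasDerivAt
  have hχ2 : HasDerivAt (deriv χ) (deriv (deriv χ) z) z :=
    (hχa.deriv z hz).differentiableAt.hasDerivAt
  have hud : DifferentiableAt ℝ u z :=
    ((hu.differentiableOn (by norm_num)).differentiableAt hmem)
  have hdu : HasFDerivAt u (fderiv ℝ u z) z := hud.hasFDerivAt
  have hP0' : P z ≠ 0 := hP0 z hz
  set du := fderiv ℝ u z with hdu_def
  -- rewrite the potential in conj/sqrt form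
  have habs2 : ∀ w : ℂ, ((‖w‖ : ℂ)) ^ 2 = w * (starRingEnd ℂ) w := by
    intro w
    rw [Complex.mul_conj]
    norm_cast
    exact Complex.sq_norm w
  have habs : ∀ w : ℂ, ‖w‖ = Real.sqrt ((w * (starRingEnd ℂ) w).re) := by
    intro w
    rw [Complex.mul_conj, Complex.ofReal_re]
    exact Complex.norm_def w
  have hG : ∀ w, exactnessPotential P χ u w =
      ((Real.exp (-(2 * u w)) - (Real.sqrt ((P w * (starRingEnd ℂ) (P w)).re))⁻¹ : ℝ) : ℂ) *
        (2 * (P w * (starRingEnd ℂ) (P w)) * deriv χ w * (starRingEnd ℂ) (χ w)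
          + (χ w * (starRingEnd ℂ) (χ w)) * deriv P w * (starRingEnd ℂ) (P w)) := by
    intro w
    rw [exactnessPotential, habs2 (P w), habs2 (χ w), habs (P w)]
  have key1 := lemE P χ u z 1 (deriv (deriv P) z) (deriv (deriv χ) z) du
    hP1 hP2 hχ1 hχ2 hdu hP0'
  have keyI := lemE P χ u z Complex.I (deriv (deriv P) z) (deriv (deriv χ) z) du
    hP1 hP2 hχ1 hχ2 hdu hP0'
  have e1 : dirDeriv 1 (fun w => 2 * (exactnessPotential P χ u w).re) z
      = 2 * (Dval P χ u z 1 (deriv (deriv P) z) (deriv (deriv χ) z) (du 1)).re := by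
    show deriv (fun t : ℝ => 2 * (exactnessPotential P χ u (z + t • (1:ℂ))).re) 0 = _
    simp only [hG]
    exact (key1.complexRe.const_mul 2).deriv
  have eI : dirDeriv Complex.I (fun w => 2 * (exactnessPotential P χ u w).im) z
      = 2 * (Dval P χ u z Complex.I (deriv (deriv P) z) (deriv (deriv χ) z) (du Complex.I)).im := by
    show deriv (fun t : ℝ => 2 * (exactnessPotential P χ u (z + t • Complex.I)).im) 0 = _
    simp only [hG]
    exact (keyI.complexIm.const_mul 2).deriv
  have w1 : dirDeriv 1 u z = du 1 := (hasDerivAt_line_real z 1 hdu).deriv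
  have wI : dirDeriv Complex.I u z = du Complex.I :=
    (hasDerivAt_line_real z Complex.I hdu).deriv
  have hF : holoVariation χ u z
      = deriv χ z + χ z * (((du 1 : ℝ) : ℂ) - Complex.I * ((du Complex.I : ℝ) : ℂ)) := by
    rw [holoVariation, wirtingerDeriv, w1, wI]; ring
  rw [e1, eI, hF]
  rw [Complex.sq_norm, lieDerivCoeff, habs (P z)]
  simp only [Dval, Complex.normSq_apply, Complex.add_re, Complex.add_im, Complex.sub_re,
    Complex.sub_im, Complex.mul_re, Complex.mul_im, Complex.conj_re, Complex.conj_im,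
    Complex.ofReal_re, Complex.ofReal_im, Complex.I_re, Complex.I_im, Complex.one_re,
    Complex.one_im, Complex.re_ofNat, Complex.im_ofNat, Complex.neg_re, Complex.neg_im,
    mul_zero, zero_mul, mul_one, one_mul, mul_neg, neg_mul, neg_neg, neg_zero, sub_zero,
    zero_sub, add_zero, zero_add]
  have hnpos : 0 < (P z).re * (P z).re - -((P z).im * (P z).im) := by
    have h := Complex.normSq_pos.mpr hP0'
    rw [Complex.normSq_apply] at h
    linarith [h]
  set n : ℝ := (P z).re * (P z).re - -((P z).im * (P z).im) with hn_def
  set s : ℝ := Real.sqrt n with hs_def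
  have hs2 : s ^ 2 = n := Real.sq_sqrt hnpos.le
  have hspos : 0 < s := Real.sqrt_pos.mpr hnpos
  have hdiv1 : ∀ Xr : ℝ, Xr / (2 * s ^ 3) = Xr * s / (2 * n ^ 2) := by
    intro Xr
    rw [div_eq_div_iff (by positivity) (by positivity), ← hs2]
    ring
  have hdiv2 : s⁻¹ = s / n := by
    rw [inv_eq_one_div, div_eq_div_iff hspos.ne' hnpos.ne', ← hs2]
    ring
  have hdiv3 : ∀ Yr : ℝ, Yr / s = Yr * s / n := by
    intro Yr
    rw [div_eq_div_iff hspos.ne' hnpos.ne', ← hs2]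
    ring
  rw [hdiv2]
  simp only [hdiv1, hdiv3]
  field_simp
  ring
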